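/- For all nonnegative integers m and positive integers n with m < n and n - m - 1 ≥ 1, a(n) ≥ (o(m) + a(m) + i(n-m-1) + a(n-m-1))/2. -/
import Mathlib

theorem stmt_13
    (i a : ℕ → ℚ)
    (ha0 : a 0 = 0) (hi1 : i 1 = 1) (ha1 : a 1 = 0)
    (ha : ∀ n : ℕ, 2 ≤ n → a n = (i (n - 1) + a (n - 1)) / 2)
    (hi23 : ∀ n : ℕ, 2 ≤ n → n ≤ 3 → i n = i (n - 1))
    (hi4 : i 4 = (i 1 + a 1 + i 2 + a 2) / 2)
    (hi5 : ∀ n : ℕ, 5 ≤ n → i n = (i 2 + a 2 + i (n - 3) + a (n - 3)) / 2)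
    (o : ℕ → ℚ)
    (ho0 : o 0 = 0) (ho1 : o 1 = 0)
    (ho : ∀ n : ℕ, 2 ≤ n → o n = (o (n - 1) + a (n - 1)) / 2) :
    ∀ m n : ℕ, 1 ≤ n → m < n → 1 ≤ n - m - 1 →
      a n ≥ (o m + a m + i (n - m - 1) + a (n - m - 1)) / 2 := by
  -- explicit small values
  have hi2 : i 2 = 1 := by
    have h := hi23 2 (by norm_num) (by norm_num); norm_num at h; rw [h, hi1]
  have ha2 : a 2 = 1/2 := by
    have h := ha 2 (by norm_num); norm_num at h; rw [h, hi1, ha1]; norm_num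
  have hi3 : i 3 = 1 := by
    have h := hi23 3 (by norm_num) (by norm_num); norm_num at h; rw [h, hi2]
  have ha3 : a 3 = 3/4 := by
    have h := ha 3 (by norm_num); norm_num at h; rw [h, hi2, ha2]; norm_num
  have hi4v : i 4 = 5/4 := by rw [hi4, hi1, ha1, hi2, ha2]; norm_num
  have ha4 : a 4 = 7/8 := by
    have h := ha 4 (by norm_num); norm_num at h; rw [h, hi3, ha3]; norm_num
  have hi5v : i 5 = 3/2 := by
    have h := hi5 5 (by norm_num); norm_num at h; rw [h, hi2, ha2]; norm_num
  have ha5 : a 5 = 17/16 := by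
    have h := ha 5 (by norm_num); norm_num at h; rw [h, hi4v, ha4]; norm_num
  have hi6 : i 6 = 13/8 := by
    have h := hi5 6 (by norm_num); norm_num at h; rw [h, hi2, ha2, hi3, ha3]; norm_num
  have ha6 : a 6 = 41/32 := by
    have h := ha 6 (by norm_num); norm_num at h; rw [h, hi5v, ha5]; norm_num
  have hi7 : i 7 = 29/16 := by
    have h := hi5 7 (by norm_num); norm_num at h; rw [h, hi2, ha2, hi4v, ha4]; norm_num
  have ha7 : a 7 = 93/64 := by
    have h := ha 7 (by norm_num); norm_num at h; rw [h, hi6, ha6]; norm_num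
  have ho2 : o 2 = 0 := by
    have h := ho 2 (by norm_num); norm_num at h; rw [h, ho1, ha1]; norm_num
  have ho3 : o 3 = 1/4 := by
    have h := ho 3 (by norm_num); norm_num at h; rw [h, ho2, ha2]; norm_num
  -- recurrence for s = i + a
  have hs : ∀ j : ℕ, i (j+5) + a (j+5)
      = (i (j+4) + a (j+4))/2 + (i (j+2) + a (j+2))/2 + 3/4 := by
    intro j
    have h1 := ha (j+5) (by omega)
    have h2 := hi5 (j+5) (by omega)
    have e1 : j+5-1 = j+4 := by omega
    have e3 : j+5-3 = j+2 := by omega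
    rw [e1] at h1; rw [e3] at h2
    rw [h1, h2, hi2, ha2]; try ring
  -- recurrence for t = o + a
  have ht : ∀ j : ℕ, o (j+2) + a (j+2)
      = (o (j+1) + a (j+1))/2 + (i (j+1) + a (j+1))/2 := by
    intro j
    have h1 := ho (j+2) (by omega)
    have h2 := ha (j+2) (by omega)
    have e : j+2-1 = j+1 := by omega
    rw [e] at h1 h2; rw [h1, h2]; try ring
  -- bounds on s
  have sb : ∀ n : ℕ, 1 ≤ n →
      3*(n:ℚ)/8 + 5/8 ≤ i n + a n ∧ i n + a n ≤ 3*(n:ℚ)/8 + 3/4 := by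
    intro n
    induction n using Nat.strong_induction_on with
    | _ n IH =>
      intro hn
      rcases le_or_gt n 4 with h4 | h4
      · interval_cases n
        · rw [hi1, ha1]; norm_num
        · rw [hi2, ha2]; norm_num
        · rw [hi3, ha3]; norm_num
        · rw [hi4v, ha4]; norm_num
      · obtain ⟨j, rfl⟩ : ∃ j, n = j + 5 := ⟨n - 5, by omega⟩
        have h := hs j
        have I1 := IH (j+4) (by omega) (by omega)
        have I2 := IH (j+2) (by omega) (by omega)
        push_cast at I1 I2 ⊢
        constructor <;> linarith [I1.1, I1.2, I2.1, I2.2]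
  have sgap : ∀ p q : ℕ, 1 ≤ p → 1 ≤ q →
      (3*(p:ℚ) - 3*(q:ℚ))/8 - 1/8 ≤ i p + a p - (i q + a q) := by
    intro p q hp hq
    have A := sb p hp
    have B := sb q hq
    linarith [A.1, B.2]
  -- base cases k ≤ 4
  have hB : ∀ m k : ℕ, 1 ≤ k → k ≤ 4 →
      o m + a m + (i k + a k) ≤ i (m+k) + a (m+k) := by
    intro m
    induction m using Nat.strong_induction_on with
    | _ m IH =>
      intro k hk1 hk4
      rcases le_or_gt m 3 with hm | hm
      · interval_cases m <;> interval_cases k <;>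
          norm_num [ho0, ho1, ho2, ho3, ha0, ha1, ha2, ha3, ha4, ha5, ha6, ha7,
            hi1, hi2, hi3, hi4v, hi5v, hi6, hi7]
      · obtain ⟨j, rfl⟩ : ∃ j, m = j + 4 := ⟨m - 4, by omega⟩
        have htr := ht (j+2)
        have e0 : j+2+2 = j+4 := by omega
        have e0' : j+2+1 = j+3 := by omega
        rw [e0, e0'] at htr
        have IH1 := IH (j+3) (by omega) k hk1 hk4
        interval_cases k
        · have hre := hs j
          have e1 : j+3+1 = j+4 := by omega
          have e2 : j+4+1 = j+5 := by omega
          rw [e1] at IH1; rw [e2]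
          have G := sgap (j+2) (j+3) (by omega) (by omega)
          push_cast at G
          linarith [hi1, ha1]
        · have hre := hs j
          have e1 : j+3+2 = j+5 := by omega
          have e2 : j+4+2 = j+6 := by omega
          rw [e1] at IH1; rw [e2]
          have hre2 := hs (j+1)
          have e3 : j+1+5 = j+6 := by omega
          have e4 : j+1+4 = j+5 := by omega
          have e5 : j+1+2 = j+3 := by omega
          rw [e3, e4, e5] at hre2
          linarith [hi2, ha2]
        · have e1 : j+3+3 = j+6 := by omega
          have e2 : j+4+3 = j+7 := by omega
          rw [e1] at IH1; rw [e2]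
          have hre2 := hs (j+2)
          have e3 : j+2+5 = j+7 := by omega
          have e4 : j+2+4 = j+6 := by omega
          have e5 : j+2+2 = j+4 := by omega
          rw [e3, e4, e5] at hre2
          have G := sgap (j+4) (j+3) (by omega) (by omega)
          push_cast at G
          linarith [hi3, ha3]
        · have e1 : j+3+4 = j+7 := by omega
          have e2 : j+4+4 = j+8 := by omega
          rw [e1] at IH1; rw [e2]
          have hre2 := hs (j+3)
          have e3 : j+3+5 = j+8 := by omega
          have e4 : j+3+4 = j+7 := by omega
          have e5 : j+3+2 = j+5 := by omega
          rw [e3, e4, e5] at hre2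
          have G := sgap (j+5) (j+3) (by omega) (by omega)
          push_cast at G
          linarith [hi4v, ha4]
  -- main superadditivity lemma
  have hE : ∀ k : ℕ, 1 ≤ k → ∀ m : ℕ,
      o m + a m + (i k + a k) ≤ i (m+k) + a (m+k) := by
    intro k
    induction k using Nat.strong_induction_on with
    | _ k IH =>
      intro hk m
      rcases le_or_gt k 4 with h | h
      · exact hB m k hk h
      · obtain ⟨j, rfl⟩ : ∃ j, k = j + 5 := ⟨k - 5, by omega⟩
        have h1 := hs j
        have h2 := hs (m+j)
        have I1 := IH (j+4) (by omega) (by omega) m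
        have I2 := IH (j+2) (by omega) (by omega) m
        have e1 : m + (j+5) = m+j+5 := by omega
        have e2 : m + (j+4) = m+j+4 := by omega
        have e3 : m + (j+2) = m+j+2 := by omega
        rw [e1]; rw [e2] at I1; rw [e3] at I2
        linarith
  -- conclude
  intro m n hn hmn hnm
  set k := n - m - 1 with hkdef
  have hk1 : 1 ≤ k := hnm
  have hn2 : 2 ≤ n := by omega
  rw [ha n hn2]
  have e1 : n - 1 = m + k := by omega
  rw [e1]
  have := hE k hk1 m
  linarith
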